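/- Let (X, a, *, e) be a monoidal V-category, i.e., a V-category with a V-functor * : X ⊠ X → X and unit element e making (X, *, e) a monoid, where X ⊠ X carries the structure (a ⊗ a)((x,y),(x',y')) = a(x,x') ⊗ a(y,y'). Define â : LX × X → V by â(x̲, y) = a(x₁ * ... * xₙ, y) (with empty product e). Then (X, â) is an (L,V)-category: e_X° ≤ â and â • â ≤ â. -/

import Mathlib

variable {V : Type*} [CommMonoid V] [CompleteLattice V]

/-- The extension of the list monad to `V`-relations. -/
def Lrel {X Y : Type*} (r : X → Y → V) : List X → List Y → V
  | [], [] => 1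
  | x :: xs, y :: ys => r x y * Lrel r xs ys
  | [], _ :: _ => ⊥
  | _ :: _, [] => ⊥

/-- The `V`-relation `Lb ∘ m_X° : LX ⇸ LX`. -/
def freeStr {X : Type*} (b : List X → X → V) : List X → List X → V :=
  fun xs ys => ⨆ l : List (List X), (⨆ _ : l.flatten = xs, (1 : V)) * Lrel b l ys

/-- A monoidal `V`-category `(X, a, *, e)` gives a representable `(L,V)`-category
with structure `â(x̲, y) = a(x₁ * ... * xₙ, y)` (empty product `e`). -/
theorem monoidal_vcat_representable
    [IsQuantale V] {X : Type*}
    (a : X → X → V)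
    (ha_refl : ∀ x : X, (1 : V) ≤ a x x)
    (ha_trans : ∀ x y z : X, a x y * a y z ≤ a x z)
    (mul : X → X → X) (e : X)
    (hassoc : ∀ x y z : X, mul (mul x y) z = mul x (mul y z))
    (hel : ∀ x : X, mul e x = x) (her : ∀ x : X, mul x e = x)
    -- * : X ⊠ X → X is a V-functor
    (hfun : ∀ x x' y y' : X, a x x' * a y y' ≤ a (mul x y) (mul x' y')) :
    -- e_X° ≤ â
    (∀ (xs : List X) (y : X),
        (⨆ _ : xs = [y], (1 : V)) ≤ a (xs.foldr mul e) y) ∧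
    -- â • â ≤ â
    (∀ (xs : List X) (y : X),
        (⨆ zs : List X,
            freeStr (fun l x => a (l.foldr mul e) x) xs zs *
              a (zs.foldr mul e) y) ≤ a (xs.foldr mul e) y) := by
  set b : List X → X → V := fun l x => a (l.foldr mul e) x with hb
  have hprod : ∀ (l : List X) (c : X), l.foldr mul c = mul (l.foldr mul e) c := by
    intro l
    induction l with
    | nil => intro c; simp [hel]
    | cons x xs ih => intro c; rw [List.foldr_cons, ih, List.foldr_cons, hassoc]
  have key : ∀ (l : List (List X)) (zs : List X),
      Lrel b l zs ≤ a (l.flatten.foldr mul e) (zs.foldr mul e) := by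
    intro l
    induction l with
    | nil =>
      intro zs
      cases zs with
      | nil => simpa [Lrel] using ha_refl e
      | cons z zs => simp [Lrel]
    | cons w ws ih =>
      intro zs
      cases zs with
      | nil => simp [Lrel]
      | cons z zs =>
        show b w z * Lrel b ws zs ≤ _
        calc b w z * Lrel b ws zs
            ≤ a (w.foldr mul e) z * a (ws.flatten.foldr mul e) (zs.foldr mul e) :=
              mul_le_mul' le_rfl (ih zs)
          _ ≤ a (mul (w.foldr mul e) (ws.flatten.foldr mul e))
                (mul z (zs.foldr mul e)) := hfun _ _ _ _
          _ = a ((w :: ws).flatten.foldr mul e) ((z :: zs).foldr mul e) := by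
              rw [show (w :: ws).flatten = w ++ ws.flatten from rfl,
                List.foldr_append, hprod w (ws.flatten.foldr mul e), List.foldr_cons]
  constructor
  · intro xs y
    apply iSup_le
    rintro rfl
    simpa [her] using ha_refl y
  · intro xs y
    apply iSup_le
    intro zs
    rw [freeStr, Quantale.iSup_mul_distrib]
    apply iSup_le
    intro l
    by_cases h : l.flatten = xs
    · subst h
      rw [iSup_pos rfl, one_mul]
      calc Lrel b l zs * a (zs.foldr mul e) y
          ≤ a (l.flatten.foldr mul e) (zs.foldr mul e) * a (zs.foldr mul e) y :=
            mul_le_mul' (key l zs) le_rfl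
        _ ≤ a (l.flatten.foldr mul e) y := ha_trans _ _ _
    · have hbot : (⨆ _ : l.flatten = xs, (1 : V)) = ⊥ := by simp [h]
      have : (⊥ : V) * (Lrel b l zs * a (zs.foldr mul e) y) = ⊥ := by
        simpa using IsQuantale.sSup_mul_distrib (α := V) ∅
          (Lrel b l zs * a (zs.foldr mul e) y)
      rw [mul_assoc, hbot, this]
      exact bot_le
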